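/- For a > b > 0, let C(a,b) = √(a²−b²)/arccosh(a/b) (capacity of a prolate conducting ellipsoid with semi-axes a, b) and A(a,b) = 2πb²(1 + (a/b)(arcsin e)/e) with e = √(1 − b²/a²) (its surface area), and let R_A = √(A/(4π)) be the area radius. Then C/R_A → ∞ as a/b → ∞; more precisely, for t = a/b, C/R_A = √2 √(t²−1) / (arccosh(t) √(1 + t·(arcsin e)/e)) tends to infinity as t → ∞. -/

import Mathlib

open Real Filter Topology

/-- Inverse hyperbolic cosine. -/
noncomputable def arccosh (t : ℝ) : ℝ := Real.log (t + Real.sqrt (t ^ 2 - 1))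

/-- Capacity of a prolate conducting ellipsoid with semi-axes `a > b`. -/
noncomputable def ellipsoidCap (a b : ℝ) : ℝ := Real.sqrt (a ^ 2 - b ^ 2) / arccosh (a / b)

/-- Eccentricity `e = √(1 − b²/a²)`. -/
noncomputable def ecc (a b : ℝ) : ℝ := Real.sqrt (1 - b ^ 2 / a ^ 2)

/-- Surface area of the prolate ellipsoid. -/
noncomputable def ellipsoidArea (a b : ℝ) : ℝ :=
  2 * π * b ^ 2 * (1 + (a / b) * Real.arcsin (ecc a b) / ecc a b)

/-- Area radius `R_A = √(A/(4π))`. -/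
noncomputable def areaRadius (a b : ℝ) : ℝ := Real.sqrt (ellipsoidArea a b / (4 * π))

/-- The ratio in terms of `t = a/b`. -/
noncomputable def ratioF (t : ℝ) : ℝ :=
  Real.sqrt 2 * Real.sqrt (t ^ 2 - 1) /
    (arccosh t * Real.sqrt (1 + t * Real.arcsin (Real.sqrt (1 - 1 / t ^ 2)) /
      Real.sqrt (1 - 1 / t ^ 2)))

/-- For a prolate ellipsoid, `C/R_A` depends only on `t = a/b` via `ratioF`, and
`C/R_A → ∞` as `a/b → ∞`: the capacity bound fails for the area radius. -/
lemma arccosh_pos {t : ℝ} (ht : 1 < t) : 0 < arccosh t :=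
  Real.log_pos (by have := Real.sqrt_nonneg (t ^ 2 - 1); linarith)

lemma X_nonneg {t : ℝ} (ht : 0 < t) :
    0 ≤ t * Real.arcsin (Real.sqrt (1 - 1 / t ^ 2)) / Real.sqrt (1 - 1 / t ^ 2) :=
  div_nonneg (mul_nonneg ht.le (Real.arcsin_nonneg.2 (Real.sqrt_nonneg _))) (Real.sqrt_nonneg _)

lemma lower_bound {t : ℝ} (ht : 2 ≤ t) :
    Real.sqrt t / (8 * Real.log t) ≤ ratioF t := by
  have ht1 : 1 < t := by linarith
  have ht0 : 0 < t := by linarith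
  have hlogt : 0 < Real.log t := Real.log_pos ht1
  have hst : 0 < Real.sqrt t := Real.sqrt_pos.2 ht0
  set e := Real.sqrt (1 - 1 / t ^ 2) with he
  set X := t * Real.arcsin e / e with hXdef
  have hXnn : 0 ≤ X := X_nonneg ht0
  -- e ≥ 1/2
  have ht2 : 4 ≤ t ^ 2 := by nlinarith
  have hinv : 1 / t ^ 2 ≤ 1 / 4 := by
    rw [div_le_div_iff₀ (by positivity) (by norm_num)]; linarith
  have he_lb : (1 / 2 : ℝ) ≤ e := by
    rw [show (1/2 : ℝ) = Real.sqrt ((1/2)^2) by rw [Real.sqrt_sq]; norm_num]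
    exact Real.sqrt_le_sqrt (by norm_num at hinv ⊢; linarith)
  have he0 : 0 < e := by linarith
  -- X ≤ 4t
  have hX_ub : X ≤ 4 * t := by
    have h1 : Real.arcsin e / e ≤ (π / 2) / (1 / 2) :=
      div_le_div₀ (by positivity) (Real.arcsin_le_pi_div_two e) (by norm_num) he_lb
    have h2 : Real.arcsin e / e ≤ 4 := by
      have := Real.pi_le_four; linarith [h1]
    calc X = t * (Real.arcsin e / e) := by rw [hXdef, mul_div_assoc]
    _ ≤ t * 4 := by
        apply mul_le_mul_of_nonneg_left h2 ht0.le
    _ = 4 * t := by ring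
  -- sqrt(1+X) ≤ 2√2 √t
  have hsq8 : Real.sqrt 8 = 2 * Real.sqrt 2 := by
    rw [show (8:ℝ) = 2 ^ 2 * 2 by norm_num, Real.sqrt_mul (by positivity), Real.sqrt_sq (by norm_num)]
  have hS_ub : Real.sqrt (1 + X) ≤ 2 * Real.sqrt 2 * Real.sqrt t := by
    have h1 : (1 : ℝ) + X ≤ 8 * t := by linarith
    calc Real.sqrt (1 + X) ≤ Real.sqrt (8 * t) := Real.sqrt_le_sqrt h1
    _ = 2 * Real.sqrt 2 * Real.sqrt t := by
        rw [Real.sqrt_mul (by norm_num), hsq8]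
  -- arccosh t ≤ 2 log t
  have hL_ub : arccosh t ≤ 2 * Real.log t := by
    have h1 : Real.sqrt (t ^ 2 - 1) ≤ t := by
      calc Real.sqrt (t ^ 2 - 1) ≤ Real.sqrt (t ^ 2) := Real.sqrt_le_sqrt (by linarith)
      _ = t := Real.sqrt_sq ht0.le
    calc arccosh t ≤ Real.log (2 * t) := Real.log_le_log (by positivity) (by linarith)
    _ = Real.log 2 + Real.log t := Real.log_mul (by norm_num) ht0.ne'
    _ ≤ 2 * Real.log t := by
        have := Real.log_le_log (by norm_num : (0:ℝ) < 2) ht; linarith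
  -- sqrt(t²-1) ≥ t/2
  have hN_lb : t / 2 ≤ Real.sqrt (t ^ 2 - 1) := by
    rw [show t / 2 = Real.sqrt ((t / 2) ^ 2) by rw [Real.sqrt_sq (by linarith)]]
    exact Real.sqrt_le_sqrt (by nlinarith)
  have hD_pos : 0 < arccosh t * Real.sqrt (1 + X) :=
    mul_pos (arccosh_pos ht1) (Real.sqrt_pos.2 (by linarith))
  have key : Real.sqrt 2 * (t / 2) / (2 * Real.log t * (2 * Real.sqrt 2 * Real.sqrt t)) ≤
      Real.sqrt 2 * Real.sqrt (t ^ 2 - 1) / (arccosh t * Real.sqrt (1 + X)) := by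
    apply div_le_div₀ (by positivity) (by nlinarith [Real.sqrt_nonneg (2:ℝ)]) hD_pos
    exact mul_le_mul hL_ub hS_ub (Real.sqrt_nonneg _) (by positivity)
  have heq : Real.sqrt 2 * (t / 2) / (2 * Real.log t * (2 * Real.sqrt 2 * Real.sqrt t)) =
      Real.sqrt t / (8 * Real.log t) := by
    have hts : Real.sqrt t * Real.sqrt t = t := Real.mul_self_sqrt ht0.le
    have h2 : Real.sqrt 2 ≠ 0 := by positivity
    field_simp
    linear_combination (-8) * Real.sq_sqrt ht0.le
  rw [← heq]
  exact key

lemma part2 : Tendsto ratioF atTop atTop := by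
  have h0 : Tendsto (fun t : ℝ => Real.log t / Real.sqrt t) atTop (𝓝 0) := by
    have := (isLittleO_log_rpow_atTop one_half_pos).tendsto_div_nhds_zero
    refine this.congr' ?_
    filter_upwards [eventually_ge_atTop (0:ℝ)] with t _
    rw [Real.sqrt_eq_rpow]
  have h1 : Tendsto (fun t : ℝ => Real.log t / Real.sqrt t) atTop (𝓝[>] 0) := by
    refine tendsto_nhdsWithin_of_tendsto_nhds_of_eventually_within _ h0 ?_
    filter_upwards [eventually_gt_atTop (1:ℝ)] with t ht
    exact div_pos (Real.log_pos ht) (Real.sqrt_pos.2 (by linarith))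
  have h3 : Tendsto (fun t : ℝ => Real.sqrt t / Real.log t) atTop atTop := by
    refine h1.inv_tendsto_nhdsGT_zero.congr' ?_
    filter_upwards [eventually_gt_atTop (1:ℝ)] with t _
    simp [inv_div]
  have h4 : Tendsto (fun t : ℝ => Real.sqrt t / (8 * Real.log t)) atTop atTop := by
    have := h3.atTop_div_const (by norm_num : (0:ℝ) < 8)
    refine this.congr ?_
    intro t; rw [div_div, mul_comm]
  refine tendsto_atTop_mono' atTop ?_ h4
  filter_upwards [eventually_ge_atTop (2:ℝ)] with t ht
  exact lower_bound ht

set_option maxHeartbeats 1000000 in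
lemma part1 (a b : ℝ) (hb : 0 < b) (hab : b < a) :
    ellipsoidCap a b / areaRadius a b = ratioF (a / b) := by
  have ha : 0 < a := hb.trans hab
  have ht : 1 < a / b := (one_lt_div hb).2 hab
  have hecc : ecc a b = Real.sqrt (1 - 1 / (a / b) ^ 2) := by
    unfold ecc
    rw [div_pow, one_div, inv_div]
  have hcap : ellipsoidCap a b = b * Real.sqrt ((a / b) ^ 2 - 1) / arccosh (a / b) := by
    unfold ellipsoidCap
    rw [show a ^ 2 - b ^ 2 = b ^ 2 * ((a / b) ^ 2 - 1) by rw [div_pow]; field_simp,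
      Real.sqrt_mul (sq_nonneg b), Real.sqrt_sq hb.le]
  have hXnn : 0 ≤ (a / b) * Real.arcsin (Real.sqrt (1 - 1 / (a / b) ^ 2)) /
      Real.sqrt (1 - 1 / (a / b) ^ 2) := X_nonneg (by linarith)
  have harea : areaRadius a b = b * (Real.sqrt (1 + (a / b) *
      Real.arcsin (Real.sqrt (1 - 1 / (a / b) ^ 2)) / Real.sqrt (1 - 1 / (a / b) ^ 2)) /
      Real.sqrt 2) := by
    unfold areaRadius
    rw [show ellipsoidArea a b / (4 * π) = b ^ 2 * ((1 + (a / b) *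
        Real.arcsin (Real.sqrt (1 - 1 / (a / b) ^ 2)) / Real.sqrt (1 - 1 / (a / b) ^ 2)) / 2) by
      unfold ellipsoidArea; rw [hecc]; field_simp [Real.pi_ne_zero]; ring]
    rw [Real.sqrt_mul (sq_nonneg b), Real.sqrt_sq hb.le,
      Real.sqrt_div (by linarith : (0:ℝ) ≤ 1 + (a / b) *
        Real.arcsin (Real.sqrt (1 - 1 / (a / b) ^ 2)) / Real.sqrt (1 - 1 / (a / b) ^ 2))]
  have hL : arccosh (a / b) ≠ 0 := (arccosh_pos ht).ne'
  have hS : Real.sqrt (1 + (a / b) * Real.arcsin (Real.sqrt (1 - 1 / (a / b) ^ 2)) /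
      Real.sqrt (1 - 1 / (a / b) ^ 2)) ≠ 0 := by positivity
  have h2 : Real.sqrt 2 ≠ 0 := by positivity
  rw [hcap, harea]
  unfold ratioF
  field_simp

theorem ellipsoid_capacity_area_radius_unbounded :
    (∀ a b : ℝ, 0 < b → b < a → ellipsoidCap a b / areaRadius a b = ratioF (a / b)) ∧
      Tendsto ratioF atTop atTop := by
  exact ⟨fun a b hb hab => part1 a b hb hab, part2⟩
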